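/- Let G be a finite simple graph on vertex set V, let S ⊆ V, and let u, v ∈ S be two distinct vertices adjacent in G. Suppose G ⊕ S is diamond-free. Write N_S(ūv̄) = S ∩ (V \ (N[u] ∪ N[v])). Let x, y ∈ N_S(ūv̄) be adjacent in G and let J = N[x] ∩ N[y] ∩ (V \ (N[u] ∪ N[v])). Then N_S(ūv̄) ⊆ J and J \ S is an independent set of G; that is, J induces a split graph with split partition (N_S(ūv̄), J \ N_S(ūv̄)). -/

import Mathlib

/-- Subgraph complementation: `scompl G S` complements the subgraph of `G` induced by `S`. -/
def scompl {V : Type*} (G : SimpleGraph V) (S : Set V) : SimpleGraph V where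
  Adj x y := x ≠ y ∧ ((x ∈ S ∧ y ∈ S ∧ ¬ G.Adj x y) ∨ (¬(x ∈ S ∧ y ∈ S) ∧ G.Adj x y))
  symm := by
    constructor
    rintro x y ⟨hxy, h⟩
    refine ⟨hxy.symm, ?_⟩
    rcases h with ⟨hx, hy, h⟩ | ⟨h, hadj⟩
    · exact Or.inl ⟨hy, hx, fun h' => h h'.symm⟩
    · exact Or.inr ⟨fun hc => h ⟨hc.2, hc.1⟩, hadj.symm⟩
  loopless := ⟨fun x h => h.1 rfl⟩

/-- Degree of a vertex in a finite simple graph. -/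
noncomputable def deg {V : Type*} [Fintype V] (G : SimpleGraph V) (v : V) : ℕ :=
  (G.neighborSet v).ncard

/-- `a, b, c, d` form an induced diamond with `a`, `b` its degree-2 vertices. -/
def IsDiamond {V : Type*} (G : SimpleGraph V) (a b c d : V) : Prop :=
  a ≠ b ∧ a ≠ c ∧ a ≠ d ∧ b ≠ c ∧ b ≠ d ∧ c ≠ d ∧
  G.Adj a c ∧ G.Adj a d ∧ G.Adj b c ∧ G.Adj b d ∧ G.Adj c d ∧ ¬ G.Adj a b

def DiamondFree {V : Type*} (G : SimpleGraph V) : Prop :=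
  ∀ a b c d : V, ¬ IsDiamond G a b c d

/-- `r` together with the `t` distinct leaves `f 0, …, f (t-1)` forms an induced `K_{1,t}`
with center `r`. -/
def IsStar {V : Type*} (G : SimpleGraph V) (t : ℕ) (r : V) (f : Fin t → V) : Prop :=
  Function.Injective f ∧ (∀ i, G.Adj r (f i)) ∧ ∀ i j, i ≠ j → ¬ G.Adj (f i) (f j)

def StarFree {V : Type*} (G : SimpleGraph V) (t : ℕ) : Prop :=
  ∀ (r : V) (f : Fin t → V), ¬ IsStar G t r f

theorem stmt15 {V : Type*} [Fintype V] (G : SimpleGraph V)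
    (S : Set V) (u v : V) (hu : u ∈ S) (hv : v ∈ S) (huv : G.Adj u v)
    (hdf : DiamondFree (scompl G S))
    (NS : Set V) (hNS : NS = {w : V | w ∈ S ∧ w ≠ u ∧ w ≠ v ∧ ¬ G.Adj u w ∧ ¬ G.Adj v w})
    (x y : V) (hx : x ∈ NS) (hy : y ∈ NS) (hxy : G.Adj x y)
    (J : Set V) (hJ : J = {w : V | (w = x ∨ G.Adj x w) ∧ (w = y ∨ G.Adj y w) ∧
      w ≠ u ∧ w ≠ v ∧ ¬ G.Adj u w ∧ ¬ G.Adj v w}) :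
    NS ⊆ J ∧ ∀ a ∈ J \ S, ∀ b ∈ J \ S, ¬ G.Adj a b := by
  subst hNS hJ
  obtain ⟨hxS, hxu, hxv, hux, hvx⟩ := hx
  obtain ⟨hyS, hyu, hyv, huy, hvy⟩ := hy
  have huvne : u ≠ v := huv.ne
  have hHuv : ¬ (scompl G S).Adj u v := by
    rintro ⟨_, ⟨_, _, hn⟩ | ⟨hn, _⟩⟩
    · exact hn huv
    · exact hn ⟨hu, hv⟩
  constructor
  · rintro w ⟨hwS, hwu, hwv, huw, hvw⟩
    have key : ∀ z : V, z ∈ S → z ≠ u → z ≠ v → ¬ G.Adj u z → ¬ G.Adj v z →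
        w ≠ z → ¬ G.Adj z w → False := by
      intro z hzS hzu hzv huz hvz hne hnadj
      exact hdf u v w z ⟨huvne, hwu.symm, hzu.symm, hwv.symm, hzv.symm, hne,
        ⟨hwu.symm, Or.inl ⟨hu, hwS, huw⟩⟩, ⟨hzu.symm, Or.inl ⟨hu, hzS, huz⟩⟩,
        ⟨hwv.symm, Or.inl ⟨hv, hwS, hvw⟩⟩, ⟨hzv.symm, Or.inl ⟨hv, hzS, hvz⟩⟩,
        ⟨hne, Or.inl ⟨hwS, hzS, fun h => hnadj h.symm⟩⟩, hHuv⟩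
    refine ⟨?_, ?_, hwu, hwv, huw, hvw⟩
    · by_contra h
      push_neg at h
      exact key x hxS hxu hxv hux hvx h.1 h.2
    · by_contra h
      push_neg at h
      exact key y hyS hyu hyv huy hvy h.1 h.2
  · rintro a ⟨⟨hxa, hya, _, _, _, _⟩, haS⟩ b ⟨⟨hxb, hyb, _, _, _, _⟩, hbS⟩ hab
    have hax : a ≠ x := fun h => haS (h ▸ hxS)
    have hay : a ≠ y := fun h => haS (h ▸ hyS)
    have hbx : b ≠ x := fun h => hbS (h ▸ hxS)
    have hby : b ≠ y := fun h => hbS (h ▸ hyS)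
    have Gxa : G.Adj x a := hxa.resolve_left hax
    have Gya : G.Adj y a := hya.resolve_left hay
    have Gxb : G.Adj x b := hxb.resolve_left hbx
    have Gyb : G.Adj y b := hyb.resolve_left hby
    exact hdf x y a b ⟨hxy.ne, hax.symm, hbx.symm, hay.symm, hby.symm, hab.ne,
      ⟨hax.symm, Or.inr ⟨fun h => haS h.2, Gxa⟩⟩,
      ⟨hbx.symm, Or.inr ⟨fun h => hbS h.2, Gxb⟩⟩,
      ⟨hay.symm, Or.inr ⟨fun h => haS h.2, Gya⟩⟩,
      ⟨hby.symm, Or.inr ⟨fun h => hbS h.2, Gyb⟩⟩,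
      ⟨hab.ne, Or.inr ⟨fun h => haS h.1, hab⟩⟩,
      fun ⟨_, h⟩ => h.elim (fun ⟨_, _, hn⟩ => hn hxy) (fun ⟨hn, _⟩ => hn ⟨hxS, hyS⟩)⟩
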